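/- Let κ ∈ C_{-1}(0,∞) and λ ∈ ℂ, and define l_{κ,λ}(t) = Σ_{j=1}^∞ λ^{j-1} κ^{<j>}(t) for t > 0. Then l_{κ,λ} ∈ C_{-1}(0,∞) and it satisfies the resolvent identity l_{κ,λ}(t) = κ(t) + λ (κ * l_{κ,λ})(t) for all t > 0. (This is the conventional-function content of the operational relation I/(S_κ − λ) = l_{κ,λ} in the field of convolution quotients.) -/

import Mathlib

noncomputable section
open MeasureTheory intervalIntegral Set
open scoped Interval

/-- Laplace convolution of complex-valued functions on `(0,∞)`. -/
def convC (f g : ℝ → ℂ) : ℝ → ℂ := fun t => ∫ τ in (0:ℝ)..t, f (t - τ) * g τ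

/-- The space `C_{-1}(0,∞)` of complex-valued functions: `f(t) = t^q f₁(t)` with
`q > -1` and `f₁` continuous on `[0,∞)`. -/
def Cm1C (f : ℝ → ℂ) : Prop :=
  ∃ q : ℝ, -1 < q ∧ ∃ f₁ : ℝ → ℂ, ContinuousOn f₁ (Set.Ici 0) ∧
    ∀ t : ℝ, 0 < t → f t = ((t ^ q : ℝ) : ℂ) * f₁ t

/-- Convolution powers: `g^{<1>} = g`, `g^{<j+1>} = g * g^{<j>}` (and `g^{<0>} = 1`). -/
def convPowC (g : ℝ → ℂ) : ℕ → ℝ → ℂ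
  | 0 => fun _ => 1
  | 1 => g
  | (j + 2) => convC g (convPowC g (j + 1))

/-- `h_p(t) = t^(p-1)/Γ(p)` as a complex-valued function. -/
def hkerC (p : ℝ) : ℝ → ℂ := fun t => ((t ^ (p - 1) / Real.Gamma p : ℝ) : ℂ)



/-- weight `(1-s)^(a-1) * s^(b-1)` -/
def wker (a b : ℝ) : ℝ → ℝ := fun s => (1 - s) ^ (a - 1) * s ^ (b - 1)

def Bcoef (a b : ℝ) : ℝ := ∫ s in (0:ℝ)..1, wker a b s

lemma wker_nonneg {a b : ℝ} {s : ℝ} (h0 : 0 ≤ s) (h1 : s ≤ 1) : 0 ≤ wker a b s :=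
  mul_nonneg (Real.rpow_nonneg (by linarith) _) (Real.rpow_nonneg h0 _)

lemma wker_intervalIntegrable {a b : ℝ} (ha : 0 < a) (hb : 0 < b) :
    IntervalIntegrable (wker a b) volume 0 1 := by
  have h1 : IntervalIntegrable (wker a b) volume 0 (1/2) := by
    have hi : IntervalIntegrable (fun s : ℝ => s ^ (b - 1)) volume 0 (1/2) :=
      intervalIntegral.intervalIntegrable_rpow' (by linarith)
    have hc : ContinuousOn (fun s : ℝ => (1 - s) ^ (a - 1)) (uIcc 0 (1/2)) := by
      apply ContinuousOn.rpow_const (by fun_prop)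
      intro x hx
      rw [uIcc_of_le (by norm_num)] at hx
      left; simp only [mem_Icc] at hx; intro h; linarith [hx.2]
    exact hi.continuousOn_mul hc
  have h2 : IntervalIntegrable (wker a b) volume (1/2) 1 := by
    have hi : IntervalIntegrable (fun s : ℝ => (1 - s) ^ (a - 1)) volume (1/2) 1 := by
      have := (intervalIntegral.intervalIntegrable_rpow' (a := 1/2) (b := 0)
        (r := a - 1) (by linarith)).comp_sub_left 1
      norm_num at this
      convert this using 2 <;> norm_num
    have hc : ContinuousOn (fun s : ℝ => s ^ (b - 1)) (uIcc (1/2) 1) := by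
      apply ContinuousOn.rpow_const (by fun_prop)
      intro x hx
      rw [uIcc_of_le (by norm_num)] at hx
      left; intro h; rw [h] at hx; norm_num at hx
    exact hi.mul_continuousOn hc
  exact h1.trans h2

lemma Bcoef_nonneg {a b : ℝ} : 0 ≤ Bcoef a b := by
  apply intervalIntegral.integral_nonneg (by norm_num)
  intro u hu; exact wker_nonneg hu.1 hu.2

lemma conv_repr {a b : ℝ} (ha : 0 < a) (hb : 0 < b) {f g f₁ g₁ : ℝ → ℂ}
    (hf : ∀ t : ℝ, 0 < t → f t = ((t ^ (a-1) : ℝ) : ℂ) * f₁ t)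
    (hg : ∀ t : ℝ, 0 < t → g t = ((t ^ (b-1) : ℝ) : ℂ) * g₁ t)
    {t : ℝ} (ht : 0 < t) :
    convC f g t = ((t ^ (a + b - 1) : ℝ) : ℂ) *
      ∫ s in (0:ℝ)..1, ((wker a b s : ℝ) : ℂ) * (f₁ (t * (1 - s)) * g₁ (t * s)) := by
  have key : convC f g t = t • ∫ s in (0:ℝ)..1, f (t - t * s) * g (t * s) := by
    rw [intervalIntegral.smul_integral_comp_mul_left (fun τ => f (t - τ) * g τ) t]
    simp [convC]
  rw [key]
  have h1 : ∀ᵐ s : ℝ ∂volume, s ≠ 1 := by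
    rw [ae_iff]; simpa using measure_singleton (1:ℝ)
  have congr1 : (∫ s in (0:ℝ)..1, f (t - t * s) * g (t * s))
      = ∫ s in (0:ℝ)..1, ((t ^ (a-1) * t ^ (b-1) : ℝ) : ℂ) *
        (((wker a b s : ℝ) : ℂ) * (f₁ (t * (1 - s)) * g₁ (t * s))) := by
    apply intervalIntegral.integral_congr_ae
    filter_upwards [h1] with s hs1 hs
    rw [uIoc_of_le (by norm_num : (0:ℝ) ≤ 1)] at hs
    have hs0 : 0 < s := hs.1
    have hs1' : s < 1 := lt_of_le_of_ne hs.2 hs1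
    have h1s : 0 < 1 - s := by linarith
    have e1 : t - t * s = t * (1 - s) := by ring
    rw [e1, hf _ (by positivity), hg _ (by positivity)]
    rw [Real.mul_rpow ht.le h1s.le, Real.mul_rpow ht.le hs0.le]
    push_cast
    unfold wker
    push_cast
    ring
  rw [congr1, intervalIntegral.integral_const_mul]
  have hpow : (t:ℝ) * (t ^ (a-1) * t ^ (b-1)) = t ^ (a + b - 1) := by
    nth_rewrite 1 [← Real.rpow_one t]
    rw [← Real.rpow_add ht, ← Real.rpow_add ht]
    ring_nf
  rw [Complex.real_smul, ← mul_assoc, ← Complex.ofReal_mul, hpow]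

def convH (a b : ℝ) (f₁ g₁ : ℝ → ℂ) : ℝ → ℂ :=
  fun t => ∫ s in (0:ℝ)..1, ((wker a b s : ℝ) : ℂ) * (f₁ (t * (1 - s)) * g₁ (t * s))

lemma wker_measurable (a b : ℝ) : Measurable (wker a b) := by
  unfold wker
  have h1 : Measurable (fun s : ℝ => 1 - s) := measurable_const.sub measurable_id
  have h2 : Measurable (fun s : ℝ => s) := measurable_id
  exact (h1.pow measurable_const).mul (h2.pow measurable_const)

lemma convH_meas {a b : ℝ} {f₁ g₁ : ℝ → ℂ} (hf₁ : ContinuousOn f₁ (Ici 0))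
    (hg₁ : ContinuousOn g₁ (Ici 0)) {x : ℝ} (hx : 0 ≤ x) :
    AEStronglyMeasurable (fun s => ((wker a b s : ℝ) : ℂ) * (f₁ (x * (1 - s)) * g₁ (x * s)))
      (volume.restrict (Ι (0:ℝ) 1)) := by
  have hw : AEStronglyMeasurable (fun s => ((wker a b s : ℝ) : ℂ))
      (volume.restrict (Ι (0:ℝ) 1)) :=
    (Complex.measurable_ofReal.comp (wker_measurable a b)).aestronglyMeasurable
  have hmaps1 : MapsTo (fun s : ℝ => x * (1 - s)) (Icc 0 1) (Ici 0) := by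
    intro s hs; simp only [mem_Ici]
    have := hs.2
    nlinarith [hs.1, hs.2]
  have hmaps2 : MapsTo (fun s : ℝ => x * s) (Icc 0 1) (Ici 0) := by
    intro s hs; exact mul_nonneg hx hs.1
  have hc1 : ContinuousOn (fun s => f₁ (x * (1 - s))) (Icc 0 1) :=
    hf₁.comp (by fun_prop) hmaps1
  have hc2 : ContinuousOn (fun s => g₁ (x * s)) (Icc 0 1) :=
    hg₁.comp (by fun_prop) hmaps2
  have : Ι (0:ℝ) 1 = Ioc (0:ℝ) 1 := uIoc_of_le (by norm_num)
  rw [this]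
  exact hw.mono_measure (Measure.restrict_mono (by rw [this]) le_rfl) |>.mul
    ((((hc1.mono Ioc_subset_Icc_self).aestronglyMeasurable measurableSet_Ioc).mul
      ((hc2.mono Ioc_subset_Icc_self).aestronglyMeasurable measurableSet_Ioc)))

lemma convH_bound {a b : ℝ} (ha : 0 < a) (hb : 0 < b) {f₁ g₁ : ℝ → ℂ}
    (hf₁ : ContinuousOn f₁ (Ici 0)) (hg₁ : ContinuousOn g₁ (Ici 0))
    {T Mf Mg : ℝ} (hT : 0 ≤ T)
    (hfM : ∀ u ∈ Icc 0 T, ‖f₁ u‖ ≤ Mf) (hgM : ∀ u ∈ Icc 0 T, ‖g₁ u‖ ≤ Mg)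
    {t : ℝ} (htT : t ∈ Icc 0 T) :
    ‖convH a b f₁ g₁ t‖ ≤ Bcoef a b * (Mf * Mg) := by
  have hMf : 0 ≤ Mf := le_trans (norm_nonneg _) (hfM 0 ⟨le_refl _, hT⟩)
  have hMg : 0 ≤ Mg := le_trans (norm_nonneg _) (hgM 0 ⟨le_refl _, hT⟩)
  have key : ‖convH a b f₁ g₁ t‖ ≤ |∫ s in (0:ℝ)..1, wker a b s * (Mf * Mg)| := by
    apply intervalIntegral.norm_integral_le_abs_of_norm_le
    · rw [uIoc_of_le (by norm_num : (0:ℝ) ≤ 1)]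
      filter_upwards [ae_restrict_mem measurableSet_Ioc] with s hs
      have h1 : t * (1 - s) ∈ Icc 0 T := by
        constructor
        · nlinarith [htT.1, hs.1.le, hs.2]
        · nlinarith [htT.1, htT.2, hs.1.le, hs.2]
      have h2 : t * s ∈ Icc 0 T := by
        constructor
        · nlinarith [htT.1, hs.1.le]
        · nlinarith [htT.1, htT.2, hs.1.le, hs.2]
      rw [norm_mul, Complex.norm_real, Real.norm_eq_abs,
        abs_of_nonneg (wker_nonneg hs.1.le hs.2)]
      apply mul_le_mul_of_nonneg_left _ (wker_nonneg hs.1.le hs.2)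
      rw [norm_mul]
      exact mul_le_mul (hfM _ h1) (hgM _ h2) (norm_nonneg _) hMf
    · exact (wker_intervalIntegrable ha hb).mul_const _
  rw [intervalIntegral.integral_mul_const, abs_of_nonneg] at key
  · exact key
  · exact mul_nonneg Bcoef_nonneg (mul_nonneg hMf hMg)

lemma convH_continuousOn {a b : ℝ} (ha : 0 < a) (hb : 0 < b) {f₁ g₁ : ℝ → ℂ}
    (hf₁ : ContinuousOn f₁ (Ici 0)) (hg₁ : ContinuousOn g₁ (Ici 0)) :
    ContinuousOn (convH a b f₁ g₁) (Ici 0) := by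
  intro t₀ ht₀
  obtain ⟨Mf, hMf⟩ := (isCompact_Icc (a := (0:ℝ)) (b := t₀ + 1)).exists_bound_of_continuousOn
    (hf₁.mono (fun u hu => hu.1))
  obtain ⟨Mg, hMg⟩ := (isCompact_Icc (a := (0:ℝ)) (b := t₀ + 1)).exists_bound_of_continuousOn
    (hg₁.mono (fun u hu => hu.1))
  have hT : (0:ℝ) ≤ t₀ + 1 := by simpa using le_trans ht₀ (by linarith)
  have hMf0 : 0 ≤ Mf := le_trans (norm_nonneg _) (hMf 0 ⟨le_refl _, hT⟩)
  have hMg0 : 0 ≤ Mg := le_trans (norm_nonneg _) (hMg 0 ⟨le_refl _, hT⟩)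
  have hev : ∀ᶠ x in nhdsWithin t₀ (Ici 0), x ∈ Icc 0 (t₀ + 1) := by
    have h1 : ∀ᶠ x in nhdsWithin t₀ (Ici 0), x ∈ Ici (0:ℝ) := self_mem_nhdsWithin
    have h2 : ∀ᶠ x in nhdsWithin t₀ (Ici 0), x < t₀ + 1 :=
      eventually_nhdsWithin_of_eventually_nhds (Filter.Tendsto.eventually_lt_const (by linarith)
        Filter.tendsto_id)
    filter_upwards [h1, h2] with x hx1 hx2
    exact ⟨hx1, hx2.le⟩
  apply intervalIntegral.continuousWithinAt_of_dominated_interval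
    (bound := fun s => wker a b s * (Mf * Mg))
  · filter_upwards [hev] with x hx
    exact convH_meas hf₁ hg₁ hx.1
  · filter_upwards [hev] with x hx
    rw [uIoc_of_le (by norm_num : (0:ℝ) ≤ 1)]
    filter_upwards [] with s hs
    have h1 : x * (1 - s) ∈ Icc 0 (t₀+1) := by
      constructor
      · nlinarith [hx.1, hs.1.le, hs.2]
      · nlinarith [hx.1, hx.2, hs.1.le, hs.2]
    have h2 : x * s ∈ Icc 0 (t₀+1) := by
      constructor
      · nlinarith [hx.1, hs.1.le]
      · nlinarith [hx.1, hx.2, hs.1.le, hs.2]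
    rw [norm_mul, Complex.norm_real, Real.norm_eq_abs,
      abs_of_nonneg (wker_nonneg hs.1.le hs.2)]
    apply mul_le_mul_of_nonneg_left _ (wker_nonneg hs.1.le hs.2)
    rw [norm_mul]
    exact mul_le_mul (hMf _ h1) (hMg _ h2) (norm_nonneg _) hMf0
  · exact (wker_intervalIntegrable ha hb).mul_const _
  · rw [uIoc_of_le (by norm_num : (0:ℝ) ≤ 1)]
    filter_upwards [] with s hs
    apply ContinuousWithinAt.mul continuousWithinAt_const
    have hm1 : MapsTo (fun x : ℝ => x * (1 - s)) (Ici 0) (Ici 0) := by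
      intro x hx; exact mul_nonneg (show (0:ℝ) ≤ x from hx) (by linarith [hs.2])
    have hm2 : MapsTo (fun x : ℝ => x * s) (Ici 0) (Ici 0) := by
      intro x hx; exact mul_nonneg (show (0:ℝ) ≤ x from hx) hs.1.le
    apply ContinuousWithinAt.mul
    · exact ContinuousWithinAt.comp (g := f₁) (f := fun x : ℝ => x * (1 - s))
        (hf₁ _ (hm1 ht₀)) ((continuous_mul_right _).continuousWithinAt) hm1
    · exact ContinuousWithinAt.comp (g := g₁) (f := fun x : ℝ => x * s)
        (hg₁ _ (hm2 ht₀)) ((continuous_mul_right _).continuousWithinAt) hm2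

lemma IntervalIntegrable.ofReal' {f : ℝ → ℝ} {a b : ℝ} (h : IntervalIntegrable f volume a b) :
    IntervalIntegrable (fun x => ((f x : ℝ) : ℂ)) volume a b := by
  rw [intervalIntegrable_iff] at h ⊢
  exact h.ofReal

lemma rpow_kernel_integrable {a b t : ℝ} (ha : 0 < a) (hb : 0 < b) (ht : 0 < t) :
    IntervalIntegrable (fun τ => (t - τ) ^ (a - 1) * τ ^ (b - 1)) volume 0 t := by
  have h := ((wker_intervalIntegrable ha hb).comp_mul_left (c := t⁻¹)).const_mul
    (t ^ (a - 1) * t ^ (b - 1))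
  have h0 : (0:ℝ) / t⁻¹ = 0 := by simp
  have h1 : (1:ℝ) / t⁻¹ = t := by field_simp
  rw [h0, h1] at h
  rw [intervalIntegrable_iff_integrableOn_Ioc_of_le ht.le] at h ⊢
  apply h.congr_fun _ measurableSet_Ioc
  intro τ hτ
  simp only
  have htτ : 0 ≤ t - τ := by linarith [hτ.2]
  have hτ0 : 0 ≤ τ := hτ.1.le
  unfold wker
  have e1 : 1 - t⁻¹ * τ = (t - τ) / t := by field_simp
  have e2 : t⁻¹ * τ = τ / t := by field_simp
  rw [e1, e2, Real.div_rpow htτ ht.le, Real.div_rpow hτ0 ht.le]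
  have hta : (0:ℝ) < t ^ (a - 1) := Real.rpow_pos_of_pos ht _
  have htb : (0:ℝ) < t ^ (b - 1) := Real.rpow_pos_of_pos ht _
  field_simp

lemma kernel_intervalIntegrable {a b t : ℝ} (ha : 0 < a) (hb : 0 < b) (ht : 0 < t)
    {f₁ g₁ : ℝ → ℂ} (hf₁ : ContinuousOn f₁ (Ici 0)) (hg₁ : ContinuousOn g₁ (Ici 0)) :
    IntervalIntegrable
      (fun τ => (((t - τ) ^ (a - 1) * τ ^ (b - 1) : ℝ) : ℂ) * (f₁ (t - τ) * g₁ τ))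
      volume 0 t := by
  apply IntervalIntegrable.mul_continuousOn
  · exact (rpow_kernel_integrable ha hb ht).ofReal'
  · rw [uIcc_of_le ht.le]
    have hm1 : MapsTo (fun τ : ℝ => t - τ) (Icc 0 t) (Ici 0) := by
      intro τ hτ; simp only [mem_Ici]; linarith [hτ.2]
    have hm2 : MapsTo (fun τ : ℝ => τ) (Icc 0 t) (Ici 0) := fun τ hτ => hτ.1
    exact (hf₁.comp (by fun_prop) hm1).mul (hg₁.comp (by fun_prop) hm2)

lemma Bcoef_tendsto_zero {a : ℝ} (ha : 0 < a) :
    Filter.Tendsto (fun j : ℕ => Bcoef a (((j:ℝ) + 1) * a)) Filter.atTop (nhds 0) := by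
  have key : Filter.Tendsto
      (fun j : ℕ => ∫ s in Ioc (0:ℝ) 1, wker a (((j:ℝ)+1)*a) s) Filter.atTop (nhds 0) := by
    have h0 : (0:ℂ) = 0 := rfl
    have := MeasureTheory.tendsto_integral_of_dominated_convergence
      (F := fun (j : ℕ) (s : ℝ) => wker a (((j:ℝ)+1)*a) s) (f := fun _ => (0:ℝ))
      (μ := volume.restrict (Ioc (0:ℝ) 1)) (bound := wker a a)
      (fun j => (wker_measurable _ _).aestronglyMeasurable)
      ?_ ?_ ?_
    · simpa using this
    · rw [show Integrable (wker a a) (volume.restrict (Ioc (0:ℝ) 1)) =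
          IntegrableOn (wker a a) (Ioc (0:ℝ) 1) volume from rfl,
        ← intervalIntegrable_iff_integrableOn_Ioc_of_le (by norm_num : (0:ℝ) ≤ 1)]
      exact wker_intervalIntegrable ha ha
    · intro j
      filter_upwards [ae_restrict_mem measurableSet_Ioc] with s hs
      rw [Real.norm_eq_abs, abs_of_nonneg (wker_nonneg hs.1.le hs.2)]
      unfold wker
      apply mul_le_mul_of_nonneg_left _ (Real.rpow_nonneg (by linarith [hs.2]) _)
      apply Real.rpow_le_rpow_of_exponent_ge hs.1 hs.2
      nlinarith [hs.1.le, ha.le, Nat.cast_nonneg (α := ℝ) j]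
    · have h1 : ∀ᵐ s : ℝ ∂(volume.restrict (Ioc (0:ℝ) 1)), s ≠ 1 := by
        rw [ae_iff]
        have : {s : ℝ | ¬ s ≠ 1} = {1} := by ext x; simp
        rw [this]
        exact le_antisymm ((Measure.restrict_apply_le _ _).trans (by simp)) zero_le
      filter_upwards [ae_restrict_mem measurableSet_Ioc, h1] with s hs hs1
      have hs01 : s < 1 := lt_of_le_of_ne hs.2 hs1
      unfold wker
      rw [show (0:ℝ) = (1-s)^(a-1) * 0 by ring]
      apply Filter.Tendsto.const_mul
      have heq : ∀ j : ℕ, s ^ (((j:ℝ)+1)*a - 1) = (s ^ a) ^ j * s ^ (a - 1) := by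
        intro j
        rw [← Real.rpow_natCast (s ^ a) j, ← Real.rpow_mul hs.1.le, ← Real.rpow_add hs.1]
        ring_nf
      simp_rw [heq]
      rw [show (0:ℝ) = 0 * s ^ (a-1) by ring]
      apply Filter.Tendsto.mul_const
      exact tendsto_pow_atTop_nhds_zero_of_lt_one (Real.rpow_nonneg hs.1.le _)
        (Real.rpow_lt_one hs.1.le hs01 ha)
  have : ∀ j : ℕ, Bcoef a (((j:ℝ)+1)*a) = ∫ s in Ioc (0:ℝ) 1, wker a (((j:ℝ)+1)*a) s := by
    intro j
    rw [Bcoef, intervalIntegral.integral_of_le (by norm_num : (0:ℝ) ≤ 1)]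
  simpa [this] using key

def repFn (a : ℝ) (κ₁ : ℝ → ℂ) : ℕ → ℝ → ℂ
  | 0 => κ₁
  | (j+1) => convH a (((j:ℝ)+1)*a) κ₁ (repFn a κ₁ j)

lemma repFn_cont {a : ℝ} (ha : 0 < a) {κ₁ : ℝ → ℂ} (hκ₁ : ContinuousOn κ₁ (Ici 0)) :
    ∀ j, ContinuousOn (repFn a κ₁ j) (Ici 0) := by
  intro j
  induction j with
  | zero => exact hκ₁
  | succ j ih =>
    exact convH_continuousOn ha (by positivity) hκ₁ ih

lemma repFn_repr {a : ℝ} (ha : 0 < a) {κ κ₁ : ℝ → ℂ}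
    (hκ : ∀ t : ℝ, 0 < t → κ t = ((t ^ (a-1) : ℝ) : ℂ) * κ₁ t) :
    ∀ j, ∀ t : ℝ, 0 < t →
      convPowC κ (j+1) t = ((t ^ (((j:ℝ)+1)*a - 1) : ℝ) : ℂ) * repFn a κ₁ j t := by
  intro j
  induction j with
  | zero =>
    intro t ht
    have : (((0:ℕ):ℝ)+1)*a - 1 = a - 1 := by norm_num
    rw [this]
    exact hκ t ht
  | succ j ih =>
    intro t ht
    show convC κ (convPowC κ (j+1)) t = _
    have := conv_repr ha (b := ((j:ℝ)+1)*a) (by positivity) hκ ih ht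
    rw [this]
    have he : a + ((j:ℝ)+1)*a - 1 = (((j+1:ℕ):ℝ)+1)*a - 1 := by push_cast; ring
    rw [he]
    rfl

lemma repFn_bound {a : ℝ} (ha : 0 < a) {κ₁ : ℝ → ℂ} (hκ₁ : ContinuousOn κ₁ (Ici 0))
    {T M : ℝ} (hT : 0 ≤ T) (hM : ∀ u ∈ Icc 0 T, ‖κ₁ u‖ ≤ M) :
    ∀ j, ∀ t ∈ Icc 0 T, ‖repFn a κ₁ j t‖ ≤
      M * ∏ i ∈ Finset.range j, (Bcoef a (((i:ℝ)+1)*a) * M) := by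
  intro j
  induction j with
  | zero => intro t ht; simpa [repFn] using hM t ht
  | succ j ih =>
    intro t ht
    have h := convH_bound ha (b := ((j:ℝ)+1)*a) (by positivity) hκ₁
      (repFn_cont ha hκ₁ j) hT hM ih ht
    calc ‖repFn a κ₁ (j+1) t‖ ≤ _ := h
    _ = M * ∏ i ∈ Finset.range (j+1), (Bcoef a (((i:ℝ)+1)*a) * M) := by
        rw [Finset.prod_range_succ]; push_cast; ring

lemma u_summable {a T M : ℝ} (ha : 0 < a) (hT : 0 < T) (hM : 0 ≤ M) (lam : ℂ) :
    Summable (fun j : ℕ => ‖lam‖^j * T^((j:ℝ)*a) *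
      (M * ∏ i ∈ Finset.range j, (Bcoef a (((i:ℝ)+1)*a) * M))) := by
  set u := fun j : ℕ => ‖lam‖^j * T^((j:ℝ)*a) *
      (M * ∏ i ∈ Finset.range j, (Bcoef a (((i:ℝ)+1)*a) * M)) with hu
  have hnn : ∀ j, 0 ≤ u j := by
    intro j
    apply mul_nonneg (mul_nonneg (pow_nonneg (norm_nonneg _) _) (Real.rpow_nonneg hT.le _))
    exact mul_nonneg hM (Finset.prod_nonneg fun i _ => mul_nonneg Bcoef_nonneg hM)
  have hrec : ∀ j, u (j+1) = u j * (‖lam‖ * T^a * (Bcoef a (((j:ℝ)+1)*a) * M)) := by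
    intro j
    rw [hu]
    simp only
    rw [Finset.prod_range_succ, pow_succ]
    rw [show (((j+1:ℕ)):ℝ)*a = (j:ℝ)*a + a by push_cast; ring, Real.rpow_add hT]
    push_cast
    ring
  have hten : Filter.Tendsto (fun j : ℕ => ‖lam‖ * T^a * (Bcoef a (((j:ℝ)+1)*a) * M))
      Filter.atTop (nhds 0) := by
    rw [show (0:ℝ) = ‖lam‖ * T^a * (0 * M) by ring]
    exact (((Bcoef_tendsto_zero ha).mul_const M).const_mul _)
  apply summable_of_ratio_norm_eventually_le (r := 1/2) (by norm_num)
  have hev : ∀ᶠ j : ℕ in Filter.atTop,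
      ‖lam‖ * T^a * (Bcoef a (((j:ℝ)+1)*a) * M) ≤ 1/2 := by
    have := hten.eventually_le_const (by norm_num : (0:ℝ) < 1/2)
    exact this
  filter_upwards [hev] with j hj
  rw [Real.norm_eq_abs, Real.norm_eq_abs, abs_of_nonneg (hnn _), abs_of_nonneg (hnn _), hrec]
  have h0 : 0 ≤ ‖lam‖ * T^a * (Bcoef a (((j:ℝ)+1)*a) * M) := by
    apply mul_nonneg (mul_nonneg (norm_nonneg _) (Real.rpow_nonneg hT.le _))
    exact mul_nonneg Bcoef_nonneg hM
  calc u j * (‖lam‖ * T^a * (Bcoef a (((j:ℝ)+1)*a) * M)) ≤ u j * (1/2) :=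
        mul_le_mul_of_nonneg_left hj (hnn j)
  _ = 1/2 * u j := by ring


/-- for `κ ∈ C_{-1}(0,∞)` and `λ ∈ ℂ`, the convolution series
`l_{κ,λ}(t) = Σ_{j≥1} λ^{j-1} κ^{<j>}(t)` belongs to `C_{-1}(0,∞)` and
satisfies the resolvent identity `l_{κ,λ} = κ + λ (κ * l_{κ,λ})` on `(0,∞)`. -/
theorem convolution_series_resolvent (κ : ℝ → ℂ) (hκ : Cm1C κ) (lam : ℂ)
    (l : ℝ → ℂ) (hl : ∀ t : ℝ, l t = ∑' j : ℕ, lam ^ j * convPowC κ (j + 1) t) :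
    Cm1C l ∧ ∀ t : ℝ, 0 < t → l t = κ t + lam * convC κ l t := by
  obtain ⟨q, hq, κ₁, hκ₁c, hκrep⟩ := hκ
  set a : ℝ := q + 1 with ha_def
  have ha : 0 < a := by simp only [ha_def]; linarith
  have hκ' : ∀ t : ℝ, 0 < t → κ t = ((t ^ (a-1) : ℝ) : ℂ) * κ₁ t := by
    intro t ht
    rw [show a - 1 = q by simp only [ha_def]; ring]
    exact hκrep t ht
  set φ : ℕ → ℝ → ℂ :=
    fun j t => lam^j * ((t ^ ((j:ℝ)*a) : ℝ) : ℂ) * repFn a κ₁ j t with hφ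
  set L : ℝ → ℂ := fun t => ∑' j, φ j t with hLdef
  have hbound : ∀ T : ℝ, 0 < T → ∃ M : ℝ, ∃ u : ℕ → ℝ, 0 ≤ M ∧
      (∀ v ∈ Icc 0 T, ‖κ₁ v‖ ≤ M) ∧ Summable u ∧ (∀ j, 0 ≤ u j) ∧
      (∀ j, ∀ t, t ∈ Icc 0 T → ‖φ j t‖ ≤ u j) := by
    intro T hT
    obtain ⟨M, hM⟩ := (isCompact_Icc (a := (0:ℝ)) (b := T)).exists_bound_of_continuousOn
      (hκ₁c.mono (fun u hu => hu.1))
    have hM0 : 0 ≤ M := le_trans (norm_nonneg _) (hM 0 ⟨le_refl _, hT.le⟩)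
    refine ⟨M, fun j => ‖lam‖^j * T^((j:ℝ)*a) *
      (M * ∏ i ∈ Finset.range j, (Bcoef a (((i:ℝ)+1)*a) * M)), hM0, hM,
      u_summable ha hT hM0 lam, ?_, ?_⟩
    · intro j
      apply mul_nonneg (mul_nonneg (pow_nonneg (norm_nonneg _) _) (Real.rpow_nonneg hT.le _))
      exact mul_nonneg hM0 (Finset.prod_nonneg fun i _ => mul_nonneg Bcoef_nonneg hM0)
    · intro j t ht
      have h1 := repFn_bound ha hκ₁c hT.le hM j t ht
      have h2 : ‖φ j t‖ = ‖lam‖^j * t^((j:ℝ)*a) * ‖repFn a κ₁ j t‖ := by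
        rw [hφ]
        simp only [norm_mul, norm_pow, Complex.norm_real, Real.norm_eq_abs,
          abs_of_nonneg (Real.rpow_nonneg ht.1 _)]
      rw [h2]
      have h3 : t^((j:ℝ)*a) ≤ T^((j:ℝ)*a) :=
        Real.rpow_le_rpow ht.1 ht.2 (by positivity)
      apply mul_le_mul _ h1 (norm_nonneg _) _
      · exact mul_le_mul_of_nonneg_left h3 (pow_nonneg (norm_nonneg _) _)
      · exact mul_nonneg (pow_nonneg (norm_nonneg _) _) (Real.rpow_nonneg hT.le _)
  have hLt : ∀ t : ℝ, 0 < t → l t = ((t ^ (a-1) : ℝ) : ℂ) * L t := by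
    intro t ht
    rw [hl t]
    have hterm : ∀ j : ℕ, lam^j * convPowC κ (j+1) t = ((t^(a-1) : ℝ) : ℂ) * φ j t := by
      intro j
      rw [repFn_repr ha hκ' j t ht, hφ]
      simp only
      rw [show ((j:ℝ)+1)*a - 1 = (a-1) + (j:ℝ)*a by ring, Real.rpow_add ht]
      push_cast
      ring
    rw [tsum_congr hterm, tsum_mul_left]
  have hφcont : ∀ j, ContinuousOn (φ j) (Ici 0) := by
    intro j
    apply ContinuousOn.mul _ (repFn_cont ha hκ₁c j)
    apply ContinuousOn.mul continuousOn_const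
    apply Continuous.continuousOn
    exact Complex.continuous_ofReal.comp (continuous_iff_continuousAt.mpr
      (fun x => Real.continuousAt_rpow_const x _ (Or.inr (by positivity))))
  have hLcont : ContinuousOn L (Ici 0) := by
    intro t₀ ht₀
    have ht₀' : (0:ℝ) ≤ t₀ := ht₀
    have hT : (0:ℝ) < t₀ + 1 := by linarith
    obtain ⟨M, u, hM0, hM, hsum, hunn, hub⟩ := hbound (t₀+1) hT
    have hcont : ContinuousOn L (Icc 0 (t₀+1)) := by
      apply continuousOn_tsum (fun j => (hφcont j).mono (fun v hv => hv.1)) hsum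
      exact fun j t htm => hub j t htm
    have h1 : ContinuousWithinAt L (Icc 0 (t₀+1)) t₀ := hcont t₀ ⟨ht₀', by linarith⟩
    rw [← Set.Ici_inter_Iic] at h1
    exact (continuousWithinAt_inter (Iic_mem_nhds (by linarith))).mp h1
  have hterm : ∀ t : ℝ, 0 < t → ∀ j : ℕ,
      lam^j * convPowC κ (j+1) t = ((t^(a-1) : ℝ) : ℂ) * φ j t := by
    intro t ht j
    rw [repFn_repr ha hκ' j t ht, hφ]
    simp only
    rw [show ((j:ℝ)+1)*a - 1 = (a-1) + (j:ℝ)*a by ring, Real.rpow_add ht]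
    push_cast
    ring
  constructor
  · refine ⟨q, hq, L, hLcont, fun t ht => ?_⟩
    rw [hLt t ht, show a - 1 = q by simp only [ha_def]; ring]
  · intro t ht
    obtain ⟨M, u, hM0, hM, hsum, hunn, hub⟩ := hbound t ht
    set g : ℝ → ℝ := fun τ => (t - τ)^(a-1) * τ^(a-1) with hg
    set W : ℕ → ℝ → ℂ := fun j τ => ((g τ : ℝ) : ℂ) * (κ₁ (t - τ) * φ j τ) with hWdef
    have hWint : ∀ j, IntervalIntegrable (W j) volume 0 t :=
      fun j => kernel_intervalIntegrable ha ha ht hκ₁c (hφcont j)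
    have hgmeas : Measurable g := by
      have h1 : Measurable (fun τ : ℝ => t - τ) := measurable_const.sub measurable_id
      exact (h1.pow measurable_const).mul (measurable_id.pow measurable_const)
    have hgint : IntegrableOn g (Ioc 0 t) volume := by
      rw [← intervalIntegrable_iff_integrableOn_Ioc_of_le ht.le]
      exact rpow_kernel_integrable ha ha ht
    have hane : ∀ᵐ τ : ℝ ∂volume, τ ≠ t := by
      rw [ae_iff]; simpa using measure_singleton t
    have hstep1 : convC κ l t = ∫ τ in (0:ℝ)..t, ((g τ : ℝ) : ℂ) * (κ₁ (t-τ) * L τ) := by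
      simp only [convC]
      apply intervalIntegral.integral_congr_ae
      filter_upwards [hane] with τ hτt hτ
      rw [uIoc_of_le ht.le] at hτ
      have hτ0 : 0 < τ := hτ.1
      have hτt' : τ < t := lt_of_le_of_ne hτ.2 hτt
      rw [hκ' (t-τ) (by linarith), hLt τ hτ0]
      simp only [hg]
      push_cast
      ring
    have hstep2 : ∀ τ : ℝ, ((g τ : ℝ) : ℂ) * (κ₁ (t-τ) * L τ) = ∑' j, W j τ := by
      intro τ
      rw [hLdef]
      simp only [hWdef]
      rw [tsum_mul_left, tsum_mul_left]
    have hWbound : ∀ j, ∀ τ ∈ Ioc (0:ℝ) t, ‖W j τ‖ ≤ g τ * (M * u j) := by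
      intro j τ hτ
      have h1 : t - τ ∈ Icc (0:ℝ) t := ⟨by linarith [hτ.2], by linarith [hτ.1]⟩
      have h2 : τ ∈ Icc (0:ℝ) t := ⟨hτ.1.le, hτ.2⟩
      have hg0 : 0 ≤ g τ := by
        apply mul_nonneg (Real.rpow_nonneg (by linarith [hτ.2]) _)
          (Real.rpow_nonneg hτ.1.le _)
      rw [hWdef]
      simp only [norm_mul, Complex.norm_real, Real.norm_eq_abs, abs_of_nonneg hg0]
      apply mul_le_mul_of_nonneg_left _ hg0
      exact mul_le_mul (hM _ h1) (hub j τ h2) (norm_nonneg _) hM0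
    have hstep3 : ∫ τ in (0:ℝ)..t, (∑' j, W j τ) = ∑' j, ∫ τ in (0:ℝ)..t, W j τ := by
      rw [intervalIntegral.integral_of_le ht.le]
      have hmeas : ∀ j, AEStronglyMeasurable (W j) (volume.restrict (Ioc 0 t)) :=
        fun j => ((intervalIntegrable_iff_integrableOn_Ioc_of_le ht.le).mp
          (hWint j)).aestronglyMeasurable
      set G : ENNReal := ∫⁻ τ in Ioc (0:ℝ) t, ENNReal.ofReal (g τ) with hG
      have hGne : G ≠ ⊤ := by
        have h1 : G ≤ ∫⁻ τ in Ioc (0:ℝ) t, ‖g τ‖ₑ := by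
          apply MeasureTheory.lintegral_mono
          intro τ
          simp only
          rw [Real.enorm_eq_ofReal_abs]
          exact ENNReal.ofReal_le_ofReal (le_abs_self _)
        exact ne_top_of_le_ne_top hgint.2.ne h1
      have hfin : ∑' j, ∫⁻ τ in Ioc (0:ℝ) t, ‖W j τ‖ₑ ≠ ⊤ := by
        have hle : ∀ j, ∫⁻ τ in Ioc (0:ℝ) t, ‖W j τ‖ₑ
            ≤ G * ENNReal.ofReal (M * u j) := by
          intro j
          have h1 : ∫⁻ τ in Ioc (0:ℝ) t, ‖W j τ‖ₑ
              ≤ ∫⁻ τ in Ioc (0:ℝ) t, ENNReal.ofReal (g τ) * ENNReal.ofReal (M * u j) := by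
            apply MeasureTheory.lintegral_mono_ae
            filter_upwards [ae_restrict_mem measurableSet_Ioc] with τ hτ
            rw [← ENNReal.ofReal_mul]
            · rw [← ofReal_norm_eq_enorm]
              exact ENNReal.ofReal_le_ofReal (hWbound j τ hτ)
            · apply mul_nonneg (Real.rpow_nonneg (by linarith [hτ.2]) _)
                (Real.rpow_nonneg hτ.1.le _)
          rw [MeasureTheory.lintegral_mul_const _ hgmeas.ennreal_ofReal] at h1
          exact h1
        apply ne_top_of_le_ne_top _ (ENNReal.tsum_le_tsum hle)
        rw [ENNReal.tsum_mul_left]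
        apply ENNReal.mul_ne_top hGne
        rw [← ENNReal.ofReal_tsum_of_nonneg (fun j => mul_nonneg hM0 (hunn j))
          (hsum.mul_left M)]
        exact ENNReal.ofReal_ne_top
      rw [MeasureTheory.integral_tsum hmeas hfin]
      congr 1
      ext j
      rw [intervalIntegral.integral_of_le ht.le]
    have hstep4 : ∀ j : ℕ, ∫ τ in (0:ℝ)..t, W j τ = lam^j * convPowC κ (j+2) t := by
      intro j
      have he : convPowC κ (j+2) t = convC κ (convPowC κ (j+1)) t := rfl
      rw [he]
      simp only [convC]
      rw [← intervalIntegral.integral_const_mul]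
      apply intervalIntegral.integral_congr_ae
      filter_upwards [hane] with τ hτt hτ
      rw [uIoc_of_le ht.le] at hτ
      have hτ0 : 0 < τ := hτ.1
      have hτt' : τ < t := lt_of_le_of_ne hτ.2 hτt
      rw [hκ' (t-τ) (by linarith), repFn_repr ha hκ' j τ hτ0]
      rw [hWdef, hφ]
      simp only [hg]
      rw [show ((j:ℝ)+1)*a - 1 = (a-1) + (j:ℝ)*a by ring, Real.rpow_add hτ0]
      push_cast
      ring
    have hφsummable : Summable (fun j => φ j t) :=
      Summable.of_norm_bounded hsum (fun j => hub j t ⟨ht.le, le_refl _⟩)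
    have hlsummable : Summable (fun j => lam^j * convPowC κ (j+1) t) :=
      (hφsummable.mul_left (((t^(a-1) : ℝ)) : ℂ)).congr (fun j => (hterm t ht j).symm)
    rw [hl t, Summable.tsum_eq_zero_add hlsummable]
    have h0 : lam^0 * convPowC κ (0+1) t = κ t := by
      simp [convPowC]
    rw [h0]
    congr 1
    have hconv : convC κ l t = ∑' j, lam^j * convPowC κ (j+2) t := by
      rw [hstep1]
      rw [intervalIntegral.integral_congr (fun τ _ => hstep2 τ), hstep3]
      exact tsum_congr hstep4
    rw [hconv, ← tsum_mul_left]
    apply tsum_congr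
    intro j
    rw [← mul_assoc, ← pow_succ']
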